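/- arXiv:1409.3864 — 5 statements merged into one kernel-verified Lean document; each statement's English description precedes it below -/
import Mathlib

section
/- For any permutation π of {1,...,k} and any integer r ≥ 1, the number of sequences (s_1,...,s_r,t_1,...,t_r) with 1 ≤ s_i < t_i ≤ k for all i, t_1 ≤ t_2 ≤ ... ≤ t_r, and π = (s_1 t_1)(s_2 t_2)⋯(s_r t_r), is at most 1_{r ≥ |π|} · k^(2r-2)/2^(r-1), where |π| denotes the minimal number of transpositions needed to write π. -/
/-- Minimal number of transpositions needed to write a permutation. -/
noncomputable def transLen {α : Type*} [DecidableEq α] (π : Equiv.Perm α) : ℕ :=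
  sInf {r | ∃ l : List (Equiv.Perm α), l.length = r ∧ (∀ τ ∈ l, τ.IsSwap) ∧ l.prod = π}

/-- Number of sequences `(s₁,…,s_r,t₁,…,t_r)` with `sᵢ < tᵢ`, `t₁ ≤ ⋯ ≤ t_r` and
`π = (s₁ t₁)⋯(s_r t_r)`. -/
noncomputable def factorCount (k r : ℕ) (π : Equiv.Perm (Fin k)) : ℕ :=
  Nat.card {p : Fin r → Fin k × Fin k //
    (∀ i, (p i).1 < (p i).2) ∧
    (∀ i j : Fin r, i ≤ j → (p i).2 ≤ (p j).2) ∧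
    (List.ofFn fun i => Equiv.swap (p i).1 (p i).2).prod = π}

lemma swap_inj_aux {k : ℕ} {a b c d : Fin k} (h1 : a < b) (h2 : c < d)
    (h : Equiv.swap a b = Equiv.swap c d) : a = c ∧ b = d := by
  have ha : Equiv.swap c d a = b := by rw [← h, Equiv.swap_apply_left]
  rcases eq_or_ne a c with rfl | hac
  · rw [Equiv.swap_apply_left] at ha
    exact ⟨rfl, ha.symm⟩
  · rcases eq_or_ne a d with rfl | had
    · rw [Equiv.swap_apply_right] at ha
      subst ha
      exact absurd (h1.trans h2) (lt_irrefl a)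
    · rw [Equiv.swap_apply_of_ne_of_ne hac had] at ha
      exact absurd ha h1.ne

lemma two_mul_card_lt_pairs (k : ℕ) :
    2 * Fintype.card {p : Fin k × Fin k // p.1 < p.2} ≤ k * k := by
  classical
  rw [Fintype.card_subtype]
  set A := Finset.univ.filter (fun p : Fin k × Fin k => p.1 < p.2) with hA
  set B := Finset.univ.filter (fun p : Fin k × Fin k => p.2 < p.1) with hB
  have hcard : A.card = B.card := by
    apply Finset.card_nbij (fun p => (p.2, p.1))
    · intro p hp
      simp only [hA, hB, Finset.mem_coe, Finset.mem_filter, Finset.mem_univ, true_and] at hp ⊢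
      exact hp
    · intro p hp q hq hpq
      simp only [Prod.mk.injEq] at hpq
      exact Prod.ext hpq.2 hpq.1
    · intro p hp
      refine ⟨(p.2, p.1), ?_, rfl⟩
      simp only [hA, hB, Finset.coe_filter, Finset.mem_univ, Set.mem_setOf_eq,
        true_and] at hp ⊢
      exact hp
  have hdisj : Disjoint A B := by
    rw [Finset.disjoint_left]
    intro p hpA hpB
    simp only [hA, hB, Finset.mem_filter] at hpA hpB
    exact absurd (hpA.2.trans hpB.2) (lt_irrefl _)
  have := Finset.card_union_of_disjoint hdisj
  have hle : (A ∪ B).card ≤ k * k := by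
    calc (A ∪ B).card ≤ (Finset.univ : Finset (Fin k × Fin k)).card :=
          Finset.card_le_card (Finset.subset_univ _)
      _ = k * k := by simp [Fintype.card_fin]
  omega

theorem stmt0 (k r : ℕ) (hr : 1 ≤ r) (π : Equiv.Perm (Fin k)) :
    (factorCount k r π : ℝ) ≤
      (if transLen π ≤ r then 1 else 0) * (k : ℝ) ^ (2 * r - 2) / 2 ^ (r - 1) := by
  classical
  by_cases htl : transLen π ≤ r
  · -- main bound
    obtain ⟨m, rfl⟩ : ∃ m, r = m + 1 := ⟨r - 1, by omega⟩
    rw [if_pos htl, one_mul]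
    set C := Fintype.card {p : Fin k × Fin k // p.1 < p.2} with hC
    have hinj : factorCount k (m + 1) π ≤ C ^ m := by
      have hcard : Nat.card (Fin m → {p : Fin k × Fin k // p.1 < p.2}) = C ^ m := by
        simp [Nat.card_eq_fintype_card, Fintype.card_fun, hC]
      rw [factorCount, ← hcard]
      apply Nat.card_le_card_of_injective
        (f := fun q => fun i : Fin m => (⟨q.1 i.succ, q.2.1 i.succ⟩ :
          {p : Fin k × Fin k // p.1 < p.2}))
      rintro ⟨p, hp1, hp2, hp3⟩ ⟨q, hq1, hq2, hq3⟩ heq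
      simp only [funext_iff, Subtype.mk.injEq] at heq
      have htail : ∀ i : Fin m, p i.succ = q i.succ := heq
      have hprod : (List.ofFn fun i : Fin m => Equiv.swap (p i.succ).1 (p i.succ).2).prod
          = (List.ofFn fun i : Fin m => Equiv.swap (q i.succ).1 (q i.succ).2).prod := by
        simp only [htail]
      have hp3' := hp3
      have hq3' := hq3
      rw [List.ofFn_succ, List.prod_cons] at hp3' hq3'
      have hswap : Equiv.swap (p 0).1 (p 0).2 = Equiv.swap (q 0).1 (q 0).2 := by
        have h1 : Equiv.swap (p 0).1 (p 0).2 =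
            π * ((List.ofFn fun i : Fin m => Equiv.swap (p i.succ).1 (p i.succ).2).prod)⁻¹ := by
          rw [← hp3']; group
        have h2 : Equiv.swap (q 0).1 (q 0).2 =
            π * ((List.ofFn fun i : Fin m => Equiv.swap (q i.succ).1 (q i.succ).2).prod)⁻¹ := by
          rw [← hq3']; group
        rw [h1, h2, hprod]
      have h0 := swap_inj_aux (hp1 0) (hq1 0) hswap
      have hhead : p 0 = q 0 := Prod.ext h0.1 h0.2
      apply Subtype.ext
      funext i
      rcases Fin.eq_zero_or_eq_succ i with rfl | ⟨j, rfl⟩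
      · exact hhead
      · exact htail j
    have hCk : (C : ℝ) ≤ (k : ℝ) ^ 2 / 2 := by
      have := two_mul_card_lt_pairs k
      have h2 : (2 : ℝ) * C ≤ (k : ℝ) * k := by exact_mod_cast this
      nlinarith
    have hC0 : (0 : ℝ) ≤ C := Nat.cast_nonneg _
    calc (factorCount k (m + 1) π : ℝ) ≤ (C : ℝ) ^ m := by
          exact_mod_cast hinj
      _ ≤ ((k : ℝ) ^ 2 / 2) ^ m := pow_le_pow_left₀ hC0 hCk m
      _ = (k : ℝ) ^ (2 * (m + 1) - 2) / 2 ^ (m + 1 - 1) := by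
          rw [div_pow, ← pow_mul]
          congr 2 <;> omega
  · -- empty case
    rw [if_neg htl, zero_mul]
    have hempty : factorCount k r π = 0 := by
      rw [factorCount, Nat.card_eq_zero]
      left
      constructor
      rintro ⟨p, hp1, _, hp3⟩
      apply htl
      apply Nat.sInf_le
      refine ⟨List.ofFn fun i => Equiv.swap (p i).1 (p i).2, by simp, ?_, hp3⟩
      intro τ hτ
      rw [List.mem_ofFn] at hτ
      obtain ⟨i, rfl⟩ := hτ
      exact ⟨(p i).1, (p i).2, (hp1 i).ne, rfl⟩
    rw [hempty]
    simp
end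

section
/- A permutation σ of {1,...,k} with |σ| = q (minimal number of transpositions q) has a factorization σ = (s_1 t_1)⋯(s_q t_q) with s_i < t_i for all i and t_1 < t_2 < ... < t_q. -/
section Aux

variable {α : Type*} [DecidableEq α]

lemma swap_id1 (a d t : α) (h1 : a ≠ d) (h2 : a ≠ t) (h3 : d ≠ t) :
    Equiv.swap a t * Equiv.swap a d = Equiv.swap a d * Equiv.swap d t := by
  ext x
  simp [Equiv.swap_apply_def]
  split_ifs <;> simp_all

lemma swap_id2 (a b t : α) (h1 : a ≠ b) (h2 : a ≠ t) (h3 : b ≠ t) :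
    Equiv.swap a t * Equiv.swap b t = Equiv.swap a b * Equiv.swap a t := by
  ext x
  simp [Equiv.swap_apply_def]
  split_ifs <;> simp_all

lemma swap_id3 (a t c d : α) (h1 : a ≠ c) (h2 : a ≠ d) (h3 : t ≠ c) (h4 : t ≠ d) :
    Equiv.swap a t * Equiv.swap c d = Equiv.swap c d * Equiv.swap a t := by
  ext x
  simp [Equiv.swap_apply_def]
  split_ifs <;> simp_all

/-- one step: push a swap moving `t` past a swap fixing `t`. -/
lemma one_step (t a : α) (ha : a ≠ t) (τ : Equiv.Perm α) (hτ : τ.IsSwap) (hτt : τ t = t) :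
    ∃ τ' a', τ'.IsSwap ∧ τ' t = t ∧ a' ≠ t ∧
      Equiv.swap a t * τ = τ' * Equiv.swap a' t := by
  obtain ⟨c, d, hcd, rfl⟩ := hτ
  have hc : c ≠ t := by
    rintro rfl
    rw [Equiv.swap_apply_left] at hτt; exact hcd hτt.symm
  have hd : d ≠ t := by
    rintro rfl
    rw [Equiv.swap_apply_right] at hτt; exact hcd hτt
  by_cases hac : a = c
  · subst hac
    exact ⟨Equiv.swap a d, d, ⟨a, d, hcd, rfl⟩, Equiv.swap_apply_of_ne_of_ne (Ne.symm ha) (Ne.symm hd), hd,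
      swap_id1 a d t hcd ha hd⟩
  · by_cases had : a = d
    · subst had
      refine ⟨Equiv.swap c a, c, ⟨c, a, fun h => hac h.symm, rfl⟩,
        Equiv.swap_apply_of_ne_of_ne (Ne.symm hc) (Ne.symm ha), hc, ?_⟩
      rw [show Equiv.swap c a = Equiv.swap a c from Equiv.swap_comm c a]
      exact swap_id1 a c t (fun h => hac h) ha hc
    · exact ⟨Equiv.swap c d, a, ⟨c, d, hcd, rfl⟩, hτt, ha,
        swap_id3 a t c d hac had (Ne.symm hc) (Ne.symm hd)⟩

/-- push a swap moving `t` past a list of swaps fixing `t`. -/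
lemma pushB (t : α) (r : List (Equiv.Perm α)) (hr : ∀ τ ∈ r, τ.IsSwap ∧ τ t = t) :
    ∀ a, a ≠ t → ∃ (r' : List (Equiv.Perm α)) (a' : α),
      (∀ τ ∈ r', τ.IsSwap ∧ τ t = t) ∧ a' ≠ t ∧ r'.length = r.length ∧
      Equiv.swap a t * r.prod = r'.prod * Equiv.swap a' t := by
  induction r with
  | nil => exact fun a ha => ⟨[], a, by simp, ha, rfl, by simp⟩
  | cons τ s ih =>
    intro a ha
    obtain ⟨hτ, hτt⟩ := hr τ (by simp)
    obtain ⟨τ', a'', hτ', hτ't, ha'', hstep⟩ := one_step t a ha τ hτ hτt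
    obtain ⟨r'', a', hr'', ha', hlen, hpush⟩ :=
      ih (fun τ hτ => hr τ (by simp [hτ])) a'' ha''
    refine ⟨τ' :: r'', a', ?_, ha', by simp [hlen], ?_⟩
    · intro x hx
      rcases List.mem_cons.1 hx with rfl | hx
      · exact ⟨hτ', hτ't⟩
      · exact hr'' x hx
    · rw [List.prod_cons, ← mul_assoc, hstep, mul_assoc, hpush, List.prod_cons, mul_assoc]

lemma prod_fix (t : α) (r : List (Equiv.Perm α)) (hr : ∀ τ ∈ r, τ.IsSwap ∧ τ t = t) :
    r.prod t = t := by
  induction r with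
  | nil => simp
  | cons τ s ih =>
    rw [List.prod_cons, Equiv.Perm.mul_apply, ih (fun τ hτ => hr τ (by simp [hτ])),
      (hr τ (by simp)).2]

/-- normalization: any product of swaps can be written as (swaps fixing t) * (at most one swap
moving t), without increasing length. -/
lemma normal (t : α) (l : List (Equiv.Perm α)) (hl : ∀ τ ∈ l, τ.IsSwap) :
    ∃ (r rest : List (Equiv.Perm α)),
      (∀ τ ∈ r, τ.IsSwap ∧ τ t = t) ∧
      (rest = [] ∨ ∃ b, b ≠ t ∧ rest = [Equiv.swap b t]) ∧
      (r ++ rest).prod = l.prod ∧ (r ++ rest).length ≤ l.length := by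
  induction l with
  | nil => exact ⟨[], [], by simp, Or.inl rfl, rfl, le_refl _⟩
  | cons τ s ih =>
    obtain ⟨r, rest, hr, hrest, hprod, hlen⟩ := ih (fun τ hτ => hl τ (by simp [hτ]))
    by_cases hτt : τ t = t
    · refine ⟨τ :: r, rest, ?_, hrest, ?_, by simpa using Nat.succ_le_succ hlen⟩
      · intro x hx
        rcases List.mem_cons.1 hx with h | hx
        · rw [h]; exact ⟨hl τ (by simp), hτt⟩
        · exact hr x hx
      · simp only [List.cons_append, List.prod_cons, hprod]
    · -- τ moves t, so τ = swap a t with a ≠ t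
      obtain ⟨x, y, hxy, hτ⟩ := hl τ (by simp)
      have hτ' : ∃ a, a ≠ t ∧ τ = Equiv.swap a t := by
        rcases eq_or_ne y t with hy | hyt
        · exact ⟨x, by rw [← hy]; exact hxy, by rw [hτ, hy]⟩
        · rcases eq_or_ne x t with hx | hxt
          · exact ⟨y, hyt, by rw [hτ, hx, Equiv.swap_comm]⟩
          · exfalso
            apply hτt
            rw [hτ]
            exact Equiv.swap_apply_of_ne_of_ne (Ne.symm hxt) (Ne.symm hyt)
      obtain ⟨a, ha, rfl⟩ := hτ'
      obtain ⟨r', a', hr', ha', hlen', hpush⟩ := pushB t r hr a ha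
      rcases hrest with rfl | ⟨b, hb, rfl⟩
      · simp only [List.append_nil] at hprod hlen
        refine ⟨r', [Equiv.swap a' t], hr', Or.inr ⟨a', ha', rfl⟩, ?_, ?_⟩
        · rw [List.prod_append, List.prod_cons, List.prod_nil, mul_one, ← hpush,
            List.prod_cons, hprod]
        · simp only [List.length_append, List.length_cons, List.length_nil, hlen']
          simpa using Nat.succ_le_succ hlen
      · have hprod2 : (Equiv.swap a t) * (r ++ [Equiv.swap b t]).prod
            = r'.prod * (Equiv.swap a' t * Equiv.swap b t) := by
          rw [List.prod_append, List.prod_cons, List.prod_nil, mul_one, ← mul_assoc, ← mul_assoc,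
            hpush, mul_assoc]
        rcases eq_or_ne a' b with rfl | hab
        · refine ⟨r', [], hr', Or.inl rfl, ?_, ?_⟩
          · rw [List.append_nil, List.prod_cons, ← hprod, hprod2, Equiv.swap_mul_self, mul_one]
          · simp only [List.append_nil, List.length_cons, hlen']
            simp only [List.length_append, List.length_cons, List.length_nil] at hlen
            omega
        · refine ⟨r' ++ [Equiv.swap a' b], [Equiv.swap a' t],
            ?_, Or.inr ⟨a', ha', rfl⟩, ?_, ?_⟩
          · intro x hx
            rcases List.mem_append.1 hx with hx | hx
            · exact hr' x hx
            · simp only [List.mem_singleton] at hx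
              subst hx
              exact ⟨⟨a', b, hab, rfl⟩, Equiv.swap_apply_of_ne_of_ne (Ne.symm ha') (Ne.symm hb)⟩
          · rw [List.prod_cons, ← hprod, hprod2, swap_id2 a' b t hab ha' hb]
            simp [List.prod_append, mul_assoc]
          · simp only [List.length_append, List.length_cons, List.length_nil, hlen'] at *
            omega

variable [Fintype α]

lemma transLen_set_nonempty (σ : Equiv.Perm α) :
    {r | ∃ l : List (Equiv.Perm α), l.length = r ∧ (∀ τ ∈ l, τ.IsSwap) ∧ l.prod = σ}.Nonempty := by
  obtain ⟨l, hl1, hl2⟩ := (Equiv.Perm.truncSwapFactors σ).out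
  exact ⟨l.length, l, rfl, hl2, hl1⟩

lemma transLen_le (σ : Equiv.Perm α) (l : List (Equiv.Perm α)) (hl : ∀ τ ∈ l, τ.IsSwap)
    (hp : l.prod = σ) : transLen σ ≤ l.length :=
  Nat.sInf_le ⟨l, rfl, hl, hp⟩

lemma transLen_spec (σ : Equiv.Perm α) :
    ∃ l : List (Equiv.Perm α), l.length = transLen σ ∧ (∀ τ ∈ l, τ.IsSwap) ∧ l.prod = σ :=
  Nat.sInf_mem (transLen_set_nonempty σ)

lemma transLen_one : transLen (1 : Equiv.Perm α) = 0 :=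
  Nat.le_zero.1 (transLen_le 1 [] (by simp) (by simp))

/-- key step lemma -/
lemma key (σ : Equiv.Perm α) (t : α) (ht : σ t ≠ t) :
    ∃ (ρ : Equiv.Perm α) (b : α), b ≠ t ∧ ρ t = t ∧ σ = ρ * Equiv.swap b t ∧
      transLen ρ + 1 = transLen σ := by
  obtain ⟨l, hlen, hsw, hprod⟩ := transLen_spec σ
  obtain ⟨r, rest, hr, hrest, hprod', hlen'⟩ := normal t l hsw
  rcases hrest with rfl | ⟨b, hb, rfl⟩
  · rw [List.append_nil, hprod] at hprod'
    exact absurd (hprod' ▸ prod_fix t r hr) ht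
  · refine ⟨r.prod, b, hb, prod_fix t r hr, ?_, ?_⟩
    · rw [← hprod, ← hprod', List.prod_append, List.prod_cons, List.prod_nil, mul_one]
    · have h1 : transLen r.prod ≤ r.length :=
        transLen_le _ r (fun τ hτ => (hr τ hτ).1) rfl
      have h2 : (r ++ [Equiv.swap b t]).length = r.length + 1 := by simp
      have h3 : transLen σ ≤ transLen r.prod + 1 := by
        obtain ⟨m, hm1, hm2, hm3⟩ := transLen_spec r.prod
        refine le_trans (transLen_le σ (m ++ [Equiv.swap b t]) ?_ ?_) (by simp [hm1])
        · intro τ hτ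
          rcases List.mem_append.1 hτ with hτ | hτ
          · exact hm2 τ hτ
          · simp only [List.mem_singleton] at hτ
            exact hτ ▸ ⟨b, t, hb, rfl⟩
        · rw [List.prod_append, List.prod_cons, List.prod_nil, mul_one, hm3, ← hprod, ← hprod',
            List.prod_append, List.prod_cons, List.prod_nil, mul_one]
      omega

end Aux

lemma stmt1_aux (k : ℕ) : ∀ (q : ℕ) (σ : Equiv.Perm (Fin k)), transLen σ = q →
    ∃ p : Fin q → Fin k × Fin k,
      (∀ i, (p i).1 < (p i).2) ∧
      StrictMono (fun i => (p i).2) ∧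
      (∀ i, (p i).2 ∈ σ.support) ∧
      (List.ofFn fun i => Equiv.swap (p i).1 (p i).2).prod = σ := by
  intro q
  induction q with
  | zero =>
    intro σ hσ
    have h0 := Nat.sInf_mem (transLen_set_nonempty σ)
    rw [show transLen σ = sInf _ from rfl] at hσ
    rw [hσ] at h0
    obtain ⟨l, hl, -, hprod⟩ := h0
    have : σ = 1 := by
      rw [← hprod, List.length_eq_zero_iff.1 hl, List.prod_nil]
    refine ⟨fun i => i.elim0, fun i => i.elim0, fun i => i.elim0, fun i => i.elim0, ?_⟩
    simp [this]
  | succ q ih =>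
    intro σ hσ
    have hσ1 : σ ≠ 1 := by
      rintro rfl
      rw [transLen_one] at hσ
      omega
    have hsupp : σ.support.Nonempty := by
      refine Finset.nonempty_of_ne_empty (fun h => hσ1 ?_)
      exact Equiv.Perm.support_eq_empty_iff.1 h
    set t := σ.support.max' hsupp with htdef
    have htmem : t ∈ σ.support := σ.support.max'_mem hsupp
    have ht : σ t ≠ t := Equiv.Perm.mem_support.1 htmem
    obtain ⟨ρ, b, hb, hρt, hfact, hlen⟩ := key σ t ht
    have hρ : transLen ρ = q := by omega
    obtain ⟨p', hp1, hp2, hp3, hp4⟩ := ih ρ hρ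
    -- b ∈ support σ and b < t
    have hbsupp : b ∈ σ.support := by
      refine Equiv.Perm.mem_support.2 ?_
      have : σ b = t := by
        rw [hfact, Equiv.Perm.mul_apply, Equiv.swap_apply_left, hρt]
      rw [this]; exact Ne.symm hb
    have hblt : b < t := lt_of_le_of_ne (σ.support.le_max' b hbsupp) hb
    -- support of ρ is below t
    have hρsub : ∀ x, x ∈ ρ.support → x < t := by
      intro x hx
      have hxt : x ≠ t := by
        rintro rfl
        exact Equiv.Perm.mem_support.1 hx hρt
      refine lt_of_le_of_ne ?_ hxt
      by_contra hle
      push_neg at hle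
      have hxb : x ≠ b := by
        rintro rfl
        exact absurd hblt (not_lt.2 (le_of_lt hle))
      have hσx : σ x = x := by
        by_contra h
        exact absurd (σ.support.le_max' x (Equiv.Perm.mem_support.2 h)) (not_le.2 hle)
      have : ρ x = x := by
        rw [hfact, Equiv.Perm.mul_apply, Equiv.swap_apply_of_ne_of_ne hxb hxt] at hσx
        exact hσx
      exact Equiv.Perm.mem_support.1 hx this
    have hρsuppσ : ρ.support ⊆ σ.support := by
      intro x hx
      have hρeq : ρ = σ * Equiv.swap b t := by
        rw [hfact, mul_assoc, Equiv.swap_mul_self, mul_one]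
      have hx' : x ∈ (σ * Equiv.swap b t).support := by rw [← hρeq]; exact hx
      have := Equiv.Perm.support_mul_le σ (Equiv.swap b t) hx'
      rcases Finset.mem_union.1 this with h | h
      · exact h
      · rw [Equiv.Perm.support_swap hb] at h
        rcases Finset.mem_insert.1 h with rfl | h
        · exact hbsupp
        · rw [Finset.mem_singleton.1 h]; exact htmem
    refine ⟨Fin.snoc p' (b, t), ?_, ?_, ?_, ?_⟩
    · intro i
      refine Fin.lastCases ?_ ?_ i
      · simp [Fin.snoc_last, hblt]
      · intro j; simpa [Fin.snoc_castSucc] using hp1 j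
    · intro i j hij
      rcases Fin.eq_castSucc_or_eq_last j with ⟨j', rfl⟩ | rfl
      · have hilt : (i : ℕ) < q := by
          have h1 : (i : ℕ) < (j' : ℕ) := hij
          have h2 : (j' : ℕ) < q := j'.isLt
          omega
        have hieq : i = Fin.castSucc ⟨i, hilt⟩ := by ext; simp
        rw [hieq]
        simp only [Fin.snoc_castSucc]
        exact hp2 (show (⟨i, hilt⟩ : Fin q) < j' from hij)
      · have hilt : (i : ℕ) < q := by
          have h1 : (i : ℕ) < q + 1 := i.isLt
          have h2 : i ≠ Fin.last q := Fin.ne_last_of_lt hij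
          have h3 : (i : ℕ) ≠ q := fun h => h2 (Fin.ext h)
          omega
        have hieq : i = Fin.castSucc ⟨i, hilt⟩ := by ext; simp
        rw [hieq]
        simp only [Fin.snoc_castSucc, Fin.snoc_last]
        exact hρsub _ (hp3 ⟨i, hilt⟩)
    · intro i
      refine Fin.lastCases ?_ ?_ i
      · simpa [Fin.snoc_last] using htmem
      · intro j
        simp only [Fin.snoc_castSucc]
        exact hρsuppσ (hp3 j)
    · rw [List.ofFn_succ']
      simp only [Fin.snoc_castSucc, Fin.snoc_last, List.concat_eq_append, List.prod_append,
        List.prod_cons, List.prod_nil, mul_one]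
      rw [hp4, ← hfact]

theorem stmt1 (k q : ℕ) (σ : Equiv.Perm (Fin k)) (hσ : transLen σ = q) :
    ∃ p : Fin q → Fin k × Fin k,
      (∀ i, (p i).1 < (p i).2) ∧
      StrictMono (fun i => (p i).2) ∧
      (List.ofFn fun i => Equiv.swap (p i).1 (p i).2).prod = σ := by
  obtain ⟨p, h1, h2, _, h4⟩ := stmt1_aux k q σ hσ
  exact ⟨p, h1, h2, h4⟩
end

section
/- Let k ≥ 1, let c be the k-cycle (1 2 ⋯ k) in S_k, let α ∈ S_k be fixed, and let q ∈ {0,...,k-1}. Then the number of permutations φ ∈ S_k with |c^{-1} φ^{-1} α^{-1} c φ| = q is at most k^{4q}·k/(2q)!, where |·| is the transposition length. -/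
/-- The `k`-cycle `(1 2 ⋯ k)`, sending `i` to `i+1` mod `k`. -/
noncomputable def fullCycle (k : ℕ) : Equiv.Perm (Fin k) := finRotate k

lemma swapProd_support_card {k : ℕ} (l : List (Equiv.Perm (Fin k)))
    (h : ∀ τ ∈ l, τ.IsSwap) : l.prod.support.card ≤ 2 * l.length := by
  induction l with
  | nil => simp
  | cons a l ih =>
    have ha : a.IsSwap := h a (by simp)
    have hl : ∀ τ ∈ l, τ.IsSwap := fun τ hτ => h τ (by simp [hτ])
    have h1 : (a * l.prod).support ⊆ a.support ∪ l.prod.support :=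
      Equiv.Perm.support_mul_le a l.prod
    calc (List.prod (a :: l)).support.card
        ≤ (a.support ∪ l.prod.support).card := by
          rw [List.prod_cons]; exact Finset.card_le_card h1
      _ ≤ a.support.card + l.prod.support.card := Finset.card_union_le _ _
      _ ≤ 2 + 2 * l.length := by
          have h2 := Equiv.Perm.card_support_eq_two.mpr ha
          have h3 := ih hl
          omega
      _ = 2 * (a :: l).length := by simp [List.length_cons]; ring

lemma transLen_support_card {k q : ℕ} (π : Equiv.Perm (Fin k)) (h : transLen π = q) :
    π.support.card ≤ 2 * q := by
  have hne : {r | ∃ l : List (Equiv.Perm (Fin k)),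
      l.length = r ∧ (∀ τ ∈ l, τ.IsSwap) ∧ l.prod = π}.Nonempty := by
    obtain ⟨l, hl, hsw⟩ := (Equiv.Perm.truncSwapFactors π).out
    exact ⟨l.length, l, rfl, hsw, hl⟩
  have hmem := Nat.sInf_mem hne
  rw [show sInf _ = q from h] at hmem
  obtain ⟨l, hlen, hsw, hprod⟩ := hmem
  rw [← hprod, ← hlen]
  exact swapProd_support_card l hsw

open Fin.NatCast in
lemma determined (n : ℕ) (β φ ψ : Equiv.Perm (Fin (n+1))) (T : Finset (Fin (n+1)))
    (hφ : ∀ x ∉ T, φ (finRotate (n+1) x) = β (finRotate (n+1) (φ x)))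
    (hψ : ∀ x ∉ T, ψ (finRotate (n+1) x) = β (finRotate (n+1) (ψ x)))
    (h0 : φ 0 = ψ 0)
    (hT : ∀ x ∈ T, φ (finRotate (n+1) x) = ψ (finRotate (n+1) x)) :
    φ = ψ := by
  have key : ∀ j : ℕ, φ ((j : Fin (n+1))) = ψ ((j : Fin (n+1))) := by
    intro j
    induction j with
    | zero => simpa using h0
    | succ j ih =>
      have hc : ((j+1 : ℕ) : Fin (n+1)) = finRotate (n+1) ((j : ℕ) : Fin (n+1)) := by
        rw [finRotate_succ_apply, Nat.cast_add_one]
      rw [hc]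
      by_cases hx : ((j : ℕ) : Fin (n+1)) ∈ T
      · exact hT _ hx
      · rw [hφ _ hx, hψ _ hx, ih]
  apply Equiv.ext
  intro y
  have := key y.val
  rwa [Fin.cast_val_eq_self] at this

lemma fact_le_pow_aux (K q : ℕ) (hk3 : 3 ≤ K) (hlt : K < 2*q) (hq : q ≤ K - 1) :
    K^K * K * Nat.factorial (2*q) ≤ K^(4*q) * K := by
  obtain ⟨t, h2q⟩ : ∃ t, 2*q = K + t := ⟨2*q - K, by omega⟩
  have ht1 : 1 ≤ t := by omega
  have ht2 : t ≤ K - 2 := by omega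
  have step1 : ∀ s, s ≤ K → Nat.factorial (K + s) ≤ Nat.factorial K * (2*K)^s := by
    intro s
    induction s with
    | zero => simp
    | succ s ih =>
      intro hs
      have h1 : Nat.factorial (K + (s+1)) = (K + s + 1) * Nat.factorial (K + s) := by
        rw [show K + (s+1) = (K+s) + 1 by ring, Nat.factorial_succ]
      rw [h1]
      calc (K + s + 1) * Nat.factorial (K + s)
          ≤ (2*K) * (Nat.factorial K * (2*K)^s) :=
            Nat.mul_le_mul (by omega) (ih (by omega))
        _ = Nat.factorial K * (2*K)^(s+1) := by ring
  have step2 : Nat.factorial (2*q) ≤ K^(4*q - K) := by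
    rw [h2q]
    calc Nat.factorial (K + t) ≤ Nat.factorial K * (2*K)^t := step1 t (by omega)
      _ ≤ K^K * (K*K)^t := Nat.mul_le_mul (Nat.factorial_le_pow K)
          (Nat.pow_le_pow_left (Nat.mul_le_mul (by omega) (le_refl K)) t)
      _ = K^(K + 2*t) := by rw [show K*K = K^2 by ring, ← pow_mul, ← pow_add, two_mul]
      _ = K^(4*q - K) := by congr 1; omega
  calc K^K * K * Nat.factorial (2*q) ≤ K^K * K * K^(4*q - K) :=
        Nat.mul_le_mul_left _ step2
    _ = K^(4*q) * K := by
        rw [mul_comm (K^K * K) _, ← mul_assoc, ← pow_add]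
        congr 2
        omega

theorem stmt4 (k : ℕ) (hk : 1 ≤ k) (α : Equiv.Perm (Fin k)) (q : ℕ) (hq : q ≤ k - 1) :
    (Nat.card {φ : Equiv.Perm (Fin k) //
        transLen ((fullCycle k)⁻¹ * φ⁻¹ * α⁻¹ * (fullCycle k) * φ) = q} : ℝ) ≤
      (k : ℝ) ^ (4 * q) * k / (Nat.factorial (2 * q)) := by
  classical
  obtain ⟨n, rfl⟩ : ∃ n, k = n + 1 := ⟨k - 1, by omega⟩
  set c : Equiv.Perm (Fin (n+1)) := fullCycle (n+1) with hc
  set m := min (2*q) (n+1) with hm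
  set A := {φ : Equiv.Perm (Fin (n+1)) //
      transLen (c⁻¹ * φ⁻¹ * α⁻¹ * c * φ) = q} with hA
  have hmk : m ≤ Fintype.card (Fin (n+1)) := by simp [hm]
  have hsupp : ∀ φ : A, ((c⁻¹ * (φ : Equiv.Perm (Fin (n+1)))⁻¹ * α⁻¹ * c * φ).support).card ≤ m := by
    intro φ
    have h1 := transLen_support_card _ φ.2
    have h2 := Finset.card_le_univ ((c⁻¹ * (φ : Equiv.Perm (Fin (n+1)))⁻¹ * α⁻¹ * c * φ).support)
    simp only [Finset.card_univ, Fintype.card_fin] at h2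
    omega
  choose S hSsub hScard using fun φ : A => Finset.exists_superset_card_eq (hsupp φ) hmk
  -- recurrence off S
  have hrec : ∀ (φ : A) (x : Fin (n+1)), x ∉ S φ →
      (φ : Equiv.Perm (Fin (n+1))) (c x) = α⁻¹ (c ((φ : Equiv.Perm (Fin (n+1))) x)) := by
    intro φ x hx
    have hfix : (c⁻¹ * (φ : Equiv.Perm (Fin (n+1)))⁻¹ * α⁻¹ * c * φ) x = x :=
      Equiv.Perm.notMem_support.mp (fun hmem => hx (hSsub φ hmem))
    have h3 := congrArg (fun y => (φ : Equiv.Perm (Fin (n+1))) (c y)) hfix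
    simpa [Equiv.Perm.mul_apply] using h3.symm
  -- encoding
  set enc : A → ({T : Finset (Fin (n+1)) // T.card = m} × ((Fin m → Fin (n+1)) × Fin (n+1))) :=
    fun φ => ⟨⟨S φ, hScard φ⟩,
      fun i => (φ : Equiv.Perm (Fin (n+1))) (c ((S φ).orderEmbOfFin (hScard φ) i)),
      (φ : Equiv.Perm (Fin (n+1))) 0⟩ with henc
  have hinj : Function.Injective enc := by
    intro φ ψ h
    have heq : S φ = S ψ := congrArg (fun p => (Prod.fst p : {T : Finset (Fin (n+1)) // T.card = m}).1) h
    have hfn := congrArg (fun p => p.2.1) h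
    have h0 := congrArg (fun p => p.2.2) h
    simp only [henc] at hfn h0
    have hvals : ∀ x ∈ S φ, (φ : Equiv.Perm (Fin (n+1))) (c x) = (ψ : Equiv.Perm (Fin (n+1))) (c x) := by
      intro x hx
      obtain ⟨i, hi⟩ : ∃ i, (S φ).orderEmbOfFin (hScard φ) i = x := by
        have hr := Finset.range_orderEmbOfFin (S φ) (hScard φ)
        have : x ∈ Set.range ((S φ).orderEmbOfFin (hScard φ)) := by
          rw [hr]; exact_mod_cast hx
        exact this
      have hembu : ((S ψ).orderEmbOfFin (hScard ψ) : Fin m ↪o Fin (n+1)) = (S φ).orderEmbOfFin (hScard φ) :=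
        Finset.orderEmbOfFin_unique' (hScard φ)
          (fun x => by rw [heq]; exact Finset.orderEmbOfFin_mem (S ψ) (hScard ψ) x)
      have hi' : (S ψ).orderEmbOfFin (hScard ψ) i = x := by
        rw [hembu, hi]
      rw [← hi]
      calc (φ : Equiv.Perm (Fin (n+1))) (c ((S φ).orderEmbOfFin (hScard φ) i))
          = (ψ : Equiv.Perm (Fin (n+1))) (c ((S ψ).orderEmbOfFin (hScard ψ) i)) := congrFun hfn i
        _ = (ψ : Equiv.Perm (Fin (n+1))) (c ((S φ).orderEmbOfFin (hScard φ) i)) := by rw [hi', hi]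
    have hφψ : (φ : Equiv.Perm (Fin (n+1))) = (ψ : Equiv.Perm (Fin (n+1))) := by
      apply determined n α⁻¹ _ _ (S φ)
      · intro x hx; exact hrec φ x hx
      · intro x hx; rw [heq] at hx; exact hrec ψ x hx
      · exact h0
      · intro x hx; exact hvals x hx
    exact Subtype.ext hφψ
  have hcard : Nat.card A ≤ (n+1).choose m * ((n+1)^m * (n+1)) := by
    have h := Nat.card_le_card_of_injective enc hinj
    simpa [Nat.card_eq_fintype_card, Fintype.card_prod, Fintype.card_finset_len,
      Fintype.card_fun] using h
  have hfac : (0:ℝ) < (Nat.factorial (2*q) : ℝ) := by exact_mod_cast Nat.factorial_pos _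
  have hcast : ((Nat.card A : ℕ) : ℝ) ≤ (((n+1).choose m * ((n+1)^m * (n+1)) : ℕ) : ℝ) :=
    Nat.cast_le.mpr hcard
  refine hcast.trans ?_
  by_cases hcase : 2*q ≤ n+1
  · -- m = 2q
    have hm2 : m = 2*q := by omega
    rw [hm2]
    have hch : ((n+1).choose (2*q) : ℝ) ≤ ((n+1:ℕ) : ℝ)^(2*q) / (Nat.factorial (2*q)) :=
      Nat.choose_le_pow_div (2*q) (n+1)
    calc ((((n+1).choose (2*q)) * ((n+1)^(2*q) * (n+1)) : ℕ) : ℝ)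
        = ((n+1).choose (2*q) : ℝ) * (((n+1:ℕ):ℝ)^(2*q) * ((n+1:ℕ):ℝ)) := by push_cast; ring
      _ ≤ (((n+1:ℕ):ℝ)^(2*q) / (Nat.factorial (2*q))) * (((n+1:ℕ):ℝ)^(2*q) * ((n+1:ℕ):ℝ)) := by
          apply mul_le_mul_of_nonneg_right hch
          positivity
      _ = ((n+1:ℕ):ℝ)^(4*q) * ((n+1:ℕ):ℝ) / (Nat.factorial (2*q)) := by
          rw [div_mul_eq_mul_div, ← mul_assoc, ← pow_add, show 2*q+2*q = 4*q by ring]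
      _ = ((n+1:ℕ):ℝ)^(4*q) * ((n+1:ℕ):ℝ) / (Nat.factorial (2*q)) := by push_cast; ring_nf
  · -- m = n+1 < 2q
    have hm2 : m = n + 1 := by omega
    rw [hm2, Nat.choose_self, one_mul]
    rw [le_div_iff₀ hfac]
    have hnat := fact_le_pow_aux (n+1) q (by omega) (by omega) (by omega)
    calc (((n+1)^(n+1) * (n+1) : ℕ) : ℝ) * (Nat.factorial (2*q) : ℝ)
        = (((n+1)^(n+1) * (n+1) * Nat.factorial (2*q) : ℕ) : ℝ) := by push_cast; ring
      _ ≤ (((n+1)^(4*q) * (n+1) : ℕ) : ℝ) := by exact_mod_cast hnat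
      _ = ((n+1:ℕ):ℝ)^(4*q) * ((n+1:ℕ):ℝ) := by push_cast; ring
end

section
/- Suppose k^2 < 2n and define Wg(π) = n^{-k} Σ_{r≥0} (-1)^r c_r(π)/n^r, where c_r(π) is the number of sequences (s_1,...,s_r,t_1,...,t_r) with 1 ≤ s_i < t_i ≤ k, t_1 ≤ ⋯ ≤ t_r, and π = (s_1 t_1)⋯(s_r t_r). Then for any π ∈ S_k with π ≠ id, |Wg(π)| ≤ (2/(n^k k^2)) · (k^2/(2n))^{|π|} · 1/(1 - k^2/(2n)). -/
/-- The Weingarten function `Wg(π) = n^{-k} Σ_{r≥0} (-1)^r c_r(π)/n^r`. -/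
noncomputable def Wg (n k : ℕ) (π : Equiv.Perm (Fin k)) : ℝ :=
  (1 / (n : ℝ) ^ k) * ∑' r : ℕ, (-1 : ℝ) ^ r * (factorCount k r π : ℝ) / (n : ℝ) ^ r

lemma swap_det {k : ℕ} {a b c d : Fin k} (hab : a < b) (hcd : c < d)
    (h : Equiv.swap a b = Equiv.swap c d) : a = c ∧ b = d := by
  have h1 : Equiv.swap c d a = b := by rw [← h]; exact Equiv.swap_apply_left a b
  rcases eq_or_ne a c with rfl | hac
  · rw [Equiv.swap_apply_left] at h1
    exact ⟨rfl, h1.symm⟩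
  · rcases eq_or_ne a d with rfl | had
    · rw [Equiv.swap_apply_right] at h1
      exact absurd (h1 ▸ (hcd.trans hab)) (lt_irrefl _)
    · rw [Equiv.swap_apply_of_ne_of_ne hac had] at h1
      exact absurd h1 hab.ne

lemma pairs_card {k : ℕ} : 2 * Nat.card {p : Fin k × Fin k // p.1 < p.2} ≤ k ^ 2 := by
  set S := {p : Fin k × Fin k // p.1 < p.2}
  have hinj : Function.Injective (fun x : S × Bool =>
      if x.2 then ((x.1 : Fin k × Fin k).2, (x.1 : Fin k × Fin k).1) else (x.1 : Fin k × Fin k)) := by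
    rintro ⟨⟨p, hp⟩, bp⟩ ⟨⟨q, hq⟩, bq⟩ hpq
    cases bp <;> cases bq <;> simp only [if_true, if_false, Bool.false_eq_true] at hpq
    · subst hpq; rfl
    · exfalso
      have h1 : p.1 = q.2 := congrArg Prod.fst hpq
      have h2 : p.2 = q.1 := congrArg Prod.snd hpq
      exact absurd (hp.trans (h2 ▸ hq)) (h1 ▸ lt_irrefl _)
    · exfalso
      have h1 : p.2 = q.1 := congrArg Prod.fst hpq
      have h2 : p.1 = q.2 := congrArg Prod.snd hpq
      exact absurd (hp.trans (h1 ▸ hq)) (h2 ▸ lt_irrefl _)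
    · have h1 : p.2 = q.2 := congrArg Prod.fst hpq
      have h2 : p.1 = q.1 := congrArg Prod.snd hpq
      obtain rfl : p = q := Prod.ext h2 h1
      rfl
  have := Nat.card_le_card_of_injective _ hinj
  rwa [Nat.card_prod, Nat.card_prod, Nat.card_eq_fintype_card (α := Bool),
    Fintype.card_bool, Nat.card_eq_fintype_card (α := Fin k), Fintype.card_fin,
    mul_comm (Nat.card S) 2, ← pow_two] at this

lemma factorCount_le {k m : ℕ} (π : Equiv.Perm (Fin k)) :
    factorCount k (m + 1) π ≤ Nat.card {p : Fin k × Fin k // p.1 < p.2} ^ m := by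
  set S := {p : Fin k × Fin k // p.1 < p.2}
  set T := {p : Fin (m + 1) → Fin k × Fin k //
    (∀ i, (p i).1 < (p i).2) ∧
    (∀ i j : Fin (m + 1), i ≤ j → (p i).2 ≤ (p j).2) ∧
    (List.ofFn fun i => Equiv.swap (p i).1 (p i).2).prod = π}
  have hinj : Function.Injective (fun x : T => (fun i : Fin m => (⟨x.1 i.succ, x.2.1 i.succ⟩ : S))) := by
    rintro ⟨p, hp1, hp2, hp3⟩ ⟨q, hq1, hq2, hq3⟩ hpq
    have htail : ∀ i : Fin m, p i.succ = q i.succ := fun i =>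
      congrArg Subtype.val (congrFun hpq i)
    have hprodtail : (List.ofFn fun i : Fin m => Equiv.swap (p i.succ).1 (p i.succ).2).prod
        = (List.ofFn fun i : Fin m => Equiv.swap (q i.succ).1 (q i.succ).2).prod := by
      congr 1
      exact congrArg List.ofFn (funext fun i => by rw [htail i])
    rw [List.ofFn_succ] at hp3 hq3
    rw [List.prod_cons] at hp3 hq3
    have h0 : Equiv.swap (p 0).1 (p 0).2 = Equiv.swap (q 0).1 (q 0).2 := by
      have := hp3.trans hq3.symm
      rw [hprodtail] at this
      exact mul_right_cancel this
    obtain ⟨h01, h02⟩ := swap_det (hp1 0) (hq1 0) h0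
    refine Subtype.ext (funext fun i => ?_)
    refine Fin.cases ?_ ?_ i
    · exact Prod.ext h01 h02
    · exact htail
  have := Nat.card_le_card_of_injective _ hinj
  rwa [Nat.card_fun, Nat.card_eq_fintype_card (α := Fin m), Fintype.card_fin] at this

lemma factorCount_eq_zero {k r : ℕ} (π : Equiv.Perm (Fin k)) (hr : r < transLen π) :
    factorCount k r π = 0 := by
  rw [factorCount, Nat.card_eq_zero]
  left
  constructor
  rintro ⟨p, hp1, _, hp3⟩
  have hmem : r ∈ {r | ∃ l : List (Equiv.Perm (Fin k)), l.length = r ∧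
      (∀ τ ∈ l, τ.IsSwap) ∧ l.prod = π} := by
    refine ⟨List.ofFn fun i => Equiv.swap (p i).1 (p i).2, by simp, ?_, hp3⟩
    intro τ hτ
    rw [List.mem_ofFn] at hτ
    obtain ⟨i, rfl⟩ := hτ
    exact ⟨_, _, (hp1 i).ne, rfl⟩
  exact absurd (Nat.sInf_le hmem) (not_le.mpr hr)

lemma one_le_transLen {k : ℕ} {π : Equiv.Perm (Fin k)} (hπ : π ≠ 1) : 1 ≤ transLen π := by
  rw [Nat.one_le_iff_ne_zero]
  intro h0
  have hne : {r | ∃ l : List (Equiv.Perm (Fin k)), l.length = r ∧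
      (∀ τ ∈ l, τ.IsSwap) ∧ l.prod = π}.Nonempty := by
    obtain ⟨l, hl1, hl2⟩ := (Equiv.Perm.truncSwapFactors π).out
    exact ⟨l.length, l, rfl, hl2, hl1⟩
  have := Nat.sInf_mem hne
  rw [show sInf _ = transLen π from rfl, h0] at this
  obtain ⟨l, hl, _, hlp⟩ := this
  rw [List.length_eq_zero_iff] at hl
  subst hl
  exact hπ (by simpa using hlp.symm)

theorem stmt7 (n k : ℕ) (hn : 0 < n) (hk : 0 < k) (h : k ^ 2 < 2 * n)
    (π : Equiv.Perm (Fin k)) (hπ : π ≠ 1) :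
    |Wg n k π| ≤ (2 / ((n : ℝ) ^ k * (k : ℝ) ^ 2)) *
      ((k : ℝ) ^ 2 / (2 * n)) ^ (transLen π) * (1 / (1 - (k : ℝ) ^ 2 / (2 * n))) := by
  set ℓ := transLen π with hℓ
  have hℓ1 : 1 ≤ ℓ := one_le_transLen hπ
  set q : ℝ := (k : ℝ) ^ 2 / (2 * n) with hq
  have hn0 : (0 : ℝ) < n := by exact_mod_cast hn
  have hk0 : (0 : ℝ) < k := by exact_mod_cast hk
  have hq0 : 0 ≤ q := by positivity
  have hq1 : q < 1 := by
    rw [hq, div_lt_one (by positivity)]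
    exact_mod_cast h
  set C : ℝ := 2 / (k : ℝ) ^ 2 with hC
  have hC0 : 0 < C := by positivity
  -- the bounding sequence
  set b : ℕ → ℝ := fun r => if r < ℓ then 0 else C * q ^ r with hb
  have hb0 : ∀ r, 0 ≤ b r := by
    intro r; rw [hb]; dsimp only; split <;> positivity
  have hble : ∀ r, b r ≤ C * q ^ r := by
    intro r; rw [hb]; dsimp only; split
    · positivity
    · exact le_refl _
  have hbsum : Summable b := by
    apply Summable.of_nonneg_of_le hb0 hble
    exact (summable_geometric_of_lt_one hq0 hq1).mul_left C
  -- term bound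
  set a : ℕ → ℝ := fun r => (-1 : ℝ) ^ r * (factorCount k r π : ℝ) / (n : ℝ) ^ r with ha
  have hab : ∀ r, |a r| ≤ b r := by
    intro r
    rw [ha, hb]; dsimp only
    rw [abs_div, abs_mul, abs_pow, abs_neg, abs_one, one_pow, one_mul, abs_of_nonneg
      (by positivity : (0:ℝ) ≤ (factorCount k r π : ℝ)), abs_of_nonneg (by positivity : (0:ℝ) ≤ (n:ℝ)^r)]
    split
    · rename_i hrℓ
      rw [factorCount_eq_zero π hrℓ]
      simp
    · rename_i hrℓ
      push_neg at hrℓ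
      obtain ⟨m, rfl⟩ : ∃ m, r = m + 1 := ⟨r - 1, by omega⟩
      have h1 : (factorCount k (m+1) π : ℝ) ≤ ((k:ℝ)^2/2) ^ m := by
        calc (factorCount k (m+1) π : ℝ) ≤ (Nat.card {p : Fin k × Fin k // p.1 < p.2} : ℝ) ^ m := by
              exact_mod_cast factorCount_le π
          _ ≤ ((k:ℝ)^2/2) ^ m := by
              apply pow_le_pow_left₀ (by positivity)
              rw [le_div_iff₀ (by norm_num)]
              calc (Nat.card {p : Fin k × Fin k // p.1 < p.2} : ℝ) * 2
                  = ((2 * Nat.card {p : Fin k × Fin k // p.1 < p.2} : ℕ) : ℝ) := by push_cast; ring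
                _ ≤ ((k^2 : ℕ) : ℝ) := by exact_mod_cast pairs_card
                _ = (k:ℝ)^2 := by push_cast; ring
      rw [div_le_iff₀ (by positivity)]
      calc (factorCount k (m+1) π : ℝ) ≤ ((k:ℝ)^2/2) ^ m := h1
        _ = C * q ^ (m+1) * (n:ℝ)^(m+1) := by
            rw [hC, hq, div_pow, div_pow, mul_pow]
            field_simp
            ring
  have hasum : Summable (fun r : ℕ => (-1:ℝ)^r * (factorCount k r π : ℝ) / (n:ℝ)^r) := by
    apply Summable.of_norm_bounded hbsum
    intro r
    rw [Real.norm_eq_abs]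
    exact hab r
  have hq1' : (0:ℝ) < 1 - q := by linarith
  have tsumb : ∑' r : ℕ, b r = C * q ^ ℓ * (1 - q)⁻¹ := by
    have hsplit := Summable.sum_add_tsum_nat_add (f := b) ℓ hbsum
    have hz : ∑ i ∈ Finset.range ℓ, b i = 0 := by
      apply Finset.sum_eq_zero
      intro i hi
      rw [hb]
      simp [Finset.mem_range.mp hi]
    have hshift : (fun i : ℕ => b (i + ℓ)) = fun i : ℕ => (C * q ^ ℓ) * q ^ i := by
      funext i
      rw [hb]
      dsimp only
      rw [if_neg (by omega), pow_add]
      ring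
    rw [← hsplit, hz, zero_add, hshift, tsum_mul_left, tsum_geometric_of_lt_one hq0 hq1]
  have key : |∑' r : ℕ, (-1:ℝ)^r * (factorCount k r π : ℝ) / (n:ℝ)^r| ≤ C * q ^ ℓ * (1 - q)⁻¹ := by
    rw [← tsumb]
    exact tsum_of_norm_bounded hbsum.hasSum (fun r => by rw [Real.norm_eq_abs]; exact hab r)
  unfold Wg
  rw [abs_mul, abs_of_nonneg (by positivity : (0:ℝ) ≤ 1/(n:ℝ)^k)]
  calc (1/(n:ℝ)^k) * |∑' r : ℕ, (-1:ℝ)^r * (factorCount k r π : ℝ) / (n:ℝ)^r|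
      ≤ (1/(n:ℝ)^k) * (C * q ^ ℓ * (1 - q)⁻¹) := by
        apply mul_le_mul_of_nonneg_left key (by positivity)
    _ = (2 / ((n : ℝ) ^ k * (k : ℝ) ^ 2)) * q ^ ℓ * (1 / (1 - q)) := by
        rw [hC]
        have h1 : ((n:ℝ)^k) ≠ 0 := by positivity
        have h2 : ((k:ℝ)^2) ≠ 0 := by positivity
        have h3 : (1 - q) ≠ 0 := ne_of_gt hq1'
        field_simp
end

section
/- Let n, k be positive integers, let s_1,...,s_n ≥ 0, set M = max_i s_i and b^2 = (1/n) Σ_i s_i^2. Then Σ over all tuples (i_1,...,i_k) ∈ {1,...,n}^k of s_{i_1}^2 ⋯ s_{i_k}^2 · #{φ ∈ S_k : i_{φ(ℓ)} = i_ℓ for all ℓ} ≤ n k (n b^2 + k M^2)^k. -/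
private lemma swap_eq_aux {n k : ℕ} (i : Fin (k+1) → Fin n) (p : Fin (k+1)) (hp : i p = i 0)
    (y : Fin (k+1)) : i (Equiv.swap 0 p y) = i y := by
  rcases eq_or_ne y 0 with rfl | h0
  · rw [Equiv.swap_apply_left, hp]
  · rcases eq_or_ne y p with rfl | hp'
    · rw [Equiv.swap_apply_right, ← hp]
    · rw [Equiv.swap_apply_of_ne_of_ne h0 hp']

private lemma stab_equiv_aux {n k : ℕ} (i : Fin (k+1) → Fin n) (p : Fin (k+1))
    (e : Equiv.Perm (Fin k)) :
    (i p = i 0 ∧ ∀ x, i ((e x).succ) = i x.succ) ↔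
      ∀ ℓ, i (Equiv.Perm.decomposeFin.symm (p, e) ℓ) = i ℓ := by
  constructor
  · rintro ⟨h1, h2⟩ ℓ
    refine Fin.cases ?_ ?_ ℓ
    · simpa using h1
    · intro x
      rw [Equiv.Perm.decomposeFin_symm_apply_succ, swap_eq_aux i p h1, h2]
  · intro h
    have h1 : i p = i 0 := by simpa using h 0
    refine ⟨h1, fun x => ?_⟩
    have hx := h x.succ
    rw [Equiv.Perm.decomposeFin_symm_apply_succ, swap_eq_aux i p h1] at hx
    exact hx

private lemma stab_card_succ {n k : ℕ} (i : Fin (k+1) → Fin n) :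
    Nat.card {φ : Equiv.Perm (Fin (k+1)) // ∀ ℓ, i (φ ℓ) = i ℓ}
      = Nat.card {p : Fin (k+1) // i p = i 0} *
        Nat.card {e : Equiv.Perm (Fin k) // ∀ x, i ((e x).succ) = i x.succ} := by
  rw [← Nat.card_prod]
  exact Nat.card_congr
    ((Equiv.subtypeProdEquivProd.symm.trans
      (Equiv.subtypeEquiv Equiv.Perm.decomposeFin.symm fun x => stab_equiv_aux i x.1 x.2)).symm)

private lemma fiber_card {n k : ℕ} (v : Fin n) (i' : Fin k → Fin n) :
    (Nat.card {p : Fin (k+1) // (Fin.cons v i' : Fin (k+1) → Fin n) p = v} : ℝ)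
      = 1 + ∑ x : Fin k, (if i' x = v then (1:ℝ) else 0) := by
  rw [Nat.card_eq_fintype_card, Fintype.card_subtype, Finset.card_filter]
  push_cast
  rw [Fin.sum_univ_succ]
  simp

private lemma key_lemma (n : ℕ) (s : Fin n → ℝ) (hs : ∀ j, 0 ≤ s j) (M : ℝ)
    (hM : ∀ j, s j ≤ M) (hM0 : 0 ≤ M) :
    ∀ k : ℕ, ∑ i : Fin k → Fin n, (∏ ℓ, (s (i ℓ)) ^ 2) *
        (Nat.card {φ : Equiv.Perm (Fin k) // ∀ ℓ, i (φ ℓ) = i ℓ} : ℝ)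
      ≤ ((∑ j, (s j) ^ 2) + (k : ℝ) * M ^ 2) ^ k := by
  intro k
  induction k with
  | zero => simp
  | succ k ih =>
    have hT0 : 0 ≤ ∑ j, (s j) ^ 2 := Finset.sum_nonneg fun j _ => sq_nonneg _
    have hM2 : (0:ℝ) ≤ M ^ 2 := sq_nonneg M
    have hre : (∑ i : Fin (k+1) → Fin n, (∏ ℓ, (s (i ℓ)) ^ 2) *
          (Nat.card {φ : Equiv.Perm (Fin (k+1)) // ∀ ℓ, i (φ ℓ) = i ℓ} : ℝ))
        = ∑ v : Fin n, ∑ i' : Fin k → Fin n,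
            (s v ^ 2 * ∏ x, (s (i' x)) ^ 2) *
            ((1 + ∑ x : Fin k, (if i' x = v then (1:ℝ) else 0)) *
              (Nat.card {e : Equiv.Perm (Fin k) // ∀ x, i' (e x) = i' x} : ℝ)) := by
      rw [← Equiv.sum_comp (Fin.consEquiv (fun _ => Fin n)), Fintype.sum_prod_type]
      refine Finset.sum_congr rfl fun v _ => Finset.sum_congr rfl fun i' _ => ?_
      have h1 : (∏ ℓ, (s ((Fin.consEquiv (fun _ => Fin n)) (v, i') ℓ)) ^ 2)
          = s v ^ 2 * ∏ x, (s (i' x)) ^ 2 := by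
        simp [Fin.consEquiv, Fin.prod_univ_succ]
      have h2 : Nat.card {φ : Equiv.Perm (Fin (k+1)) //
            ∀ ℓ, (Fin.consEquiv (fun _ => Fin n)) (v, i') (φ ℓ) = (Fin.consEquiv (fun _ => Fin n)) (v, i') ℓ}
          = Nat.card {p : Fin (k+1) // (Fin.cons v i' : Fin (k+1) → Fin n) p = v} *
            Nat.card {e : Equiv.Perm (Fin k) // ∀ x, i' (e x) = i' x} := by
        have := stab_card_succ (Fin.cons v i')
        simpa [Fin.consEquiv] using this
      rw [h1, h2]
      push_cast [fiber_card]
      try ring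
    rw [hre, Finset.sum_comm]
    have hbound : ∀ i' : Fin k → Fin n,
        ∑ v : Fin n, (s v ^ 2 * ∏ x, (s (i' x)) ^ 2) *
            ((1 + ∑ x : Fin k, (if i' x = v then (1:ℝ) else 0)) *
              (Nat.card {e : Equiv.Perm (Fin k) // ∀ x, i' (e x) = i' x} : ℝ))
          ≤ ((∑ j, (s j) ^ 2) + (k : ℝ) * M ^ 2) *
            ((∏ x, (s (i' x)) ^ 2) *
              (Nat.card {e : Equiv.Perm (Fin k) // ∀ x, i' (e x) = i' x} : ℝ)) := by
      intro i'
      have hPN : (0:ℝ) ≤ (∏ x, (s (i' x)) ^ 2) *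
          (Nat.card {e : Equiv.Perm (Fin k) // ∀ x, i' (e x) = i' x} : ℝ) :=
        mul_nonneg (Finset.prod_nonneg fun x _ => sq_nonneg _) (Nat.cast_nonneg _)
      have hsum : ∑ v : Fin n, s v ^ 2 * (1 + ∑ x : Fin k, (if i' x = v then (1:ℝ) else 0))
          ≤ (∑ j, (s j) ^ 2) + (k : ℝ) * M ^ 2 := by
        have heq : ∑ v : Fin n, s v ^ 2 * (1 + ∑ x : Fin k, (if i' x = v then (1:ℝ) else 0))
            = (∑ j, (s j) ^ 2) + ∑ x : Fin k, (s (i' x)) ^ 2 := by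
          simp only [mul_add, mul_one, Finset.sum_add_distrib]
          congr 1
          simp only [Finset.mul_sum, mul_ite, mul_one, mul_zero]
          rw [Finset.sum_comm]
          refine Finset.sum_congr rfl fun x _ => ?_
          simp [Finset.sum_ite_eq]
        rw [heq]
        have : ∑ x : Fin k, (s (i' x)) ^ 2 ≤ (k : ℝ) * M ^ 2 := by
          calc ∑ x : Fin k, (s (i' x)) ^ 2 ≤ ∑ _x : Fin k, M ^ 2 :=
                Finset.sum_le_sum fun x _ => pow_le_pow_left₀ (hs _) (hM _) 2
            _ = (k : ℝ) * M ^ 2 := by simp [mul_comm]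
        linarith
      calc ∑ v : Fin n, (s v ^ 2 * ∏ x, (s (i' x)) ^ 2) *
              ((1 + ∑ x : Fin k, (if i' x = v then (1:ℝ) else 0)) *
                (Nat.card {e : Equiv.Perm (Fin k) // ∀ x, i' (e x) = i' x} : ℝ))
          = (∑ v : Fin n, s v ^ 2 * (1 + ∑ x : Fin k, (if i' x = v then (1:ℝ) else 0))) *
            ((∏ x, (s (i' x)) ^ 2) *
              (Nat.card {e : Equiv.Perm (Fin k) // ∀ x, i' (e x) = i' x} : ℝ)) := by
            rw [Finset.sum_mul]
            exact Finset.sum_congr rfl fun v _ => by ring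
        _ ≤ _ := mul_le_mul_of_nonneg_right hsum hPN
    calc ∑ i' : Fin k → Fin n, ∑ v : Fin n, (s v ^ 2 * ∏ x, (s (i' x)) ^ 2) *
            ((1 + ∑ x : Fin k, (if i' x = v then (1:ℝ) else 0)) *
              (Nat.card {e : Equiv.Perm (Fin k) // ∀ x, i' (e x) = i' x} : ℝ))
        ≤ ∑ i' : Fin k → Fin n, ((∑ j, (s j) ^ 2) + (k : ℝ) * M ^ 2) *
            ((∏ x, (s (i' x)) ^ 2) *
              (Nat.card {e : Equiv.Perm (Fin k) // ∀ x, i' (e x) = i' x} : ℝ)) :=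
          Finset.sum_le_sum fun i' _ => hbound i'
      _ = ((∑ j, (s j) ^ 2) + (k : ℝ) * M ^ 2) *
            ∑ i' : Fin k → Fin n, (∏ x, (s (i' x)) ^ 2) *
              (Nat.card {e : Equiv.Perm (Fin k) // ∀ x, i' (e x) = i' x} : ℝ) := by
          rw [Finset.mul_sum]
      _ ≤ ((∑ j, (s j) ^ 2) + (k : ℝ) * M ^ 2) *
            ((∑ j, (s j) ^ 2) + (k : ℝ) * M ^ 2) ^ k := by
          refine mul_le_mul_of_nonneg_left ih (by positivity)
      _ = ((∑ j, (s j) ^ 2) + (k : ℝ) * M ^ 2) ^ (k + 1) := by ring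
      _ ≤ ((∑ j, (s j) ^ 2) + ((k : ℝ) + 1) * M ^ 2) ^ (k + 1) := by
          refine pow_le_pow_left₀ (by positivity) (by nlinarith) (k + 1)
      _ = ((∑ j, (s j) ^ 2) + ((k + 1 : ℕ) : ℝ) * M ^ 2) ^ (k + 1) := by push_cast; ring_nf

theorem stmt10 (n k : ℕ) (hn : 0 < n) (hk : 0 < k)
    (s : Fin n → ℝ) (hs : ∀ j, 0 ≤ s j)
    (M b : ℝ) (hM : ∀ j, s j ≤ M) (hM' : ∃ j, s j = M)
    (hb : b ^ 2 = (1 / (n : ℝ)) * ∑ j, (s j) ^ 2) :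
    ∑ i : Fin k → Fin n,
        (∏ ℓ, (s (i ℓ)) ^ 2) *
          (Nat.card {φ : Equiv.Perm (Fin k) // ∀ ℓ, i (φ ℓ) = i ℓ} : ℝ) ≤
      (n : ℝ) * k * ((n : ℝ) * b ^ 2 + (k : ℝ) * M ^ 2) ^ k := by
  have hM0 : 0 ≤ M := by obtain ⟨j, hj⟩ := hM'; exact hj ▸ hs j
  have hn0 : (0:ℝ) < n := by exact_mod_cast hn
  have hT : ∑ j, (s j) ^ 2 = (n : ℝ) * b ^ 2 := by
    rw [hb]; field_simp
  have h := key_lemma n s hs M hM hM0 k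
  rw [hT] at h
  refine h.trans ?_
  have hX : (0:ℝ) ≤ ((n : ℝ) * b ^ 2 + (k : ℝ) * M ^ 2) ^ k := by
    have : (0:ℝ) ≤ (n : ℝ) * b ^ 2 := by rw [← hT]; exact Finset.sum_nonneg fun j _ => sq_nonneg _
    positivity
  have h1 : (1:ℝ) ≤ (n : ℝ) * k := by
    have ha : (1:ℝ) ≤ n := by exact_mod_cast hn
    have hbk : (1:ℝ) ≤ k := by exact_mod_cast hk
    nlinarith
  nlinarith
end
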